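/- For every integer n ≥ 5, the achromatic arboricity of the complete graph satisfies A_α(K_n) ≤ (1/√2)·n^{3/2}, i.e., A_α(K_n) ≤ n^{3/2}/√2. -/

import Mathlib

/-- A partition of the edge set of `G` into `k` nonempty forests (acyclic classes)
such that the union of any two distinct parts contains a cycle. -/
def IsCompleteForestPartition {V : Type*} (G : SimpleGraph V) (k : ℕ)
    (P : Fin k → Set (Sym2 V)) : Prop :=
  (∀ i, (P i).Nonempty) ∧
  (∀ i j, i ≠ j → Disjoint (P i) (P j)) ∧
  (⋃ i, P i) = G.edgeSet ∧
  (∀ i, (SimpleGraph.fromEdgeSet (P i)).IsAcyclic) ∧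
  (∀ i j, i ≠ j → ¬ (SimpleGraph.fromEdgeSet (P i ∪ P j)).IsAcyclic)

/-- The achromatic arboricity of `G`: the largest number of parts in a partition of
`E(G)` into forests such that the union of any two parts contains a cycle. -/
noncomputable def achromaticArboricity {V : Type*} (G : SimpleGraph V) : ℕ :=
  sSup {k | ∃ P : Fin k → Set (Sym2 V), IsCompleteForestPartition G k P}

open SimpleGraph



private lemma chain'_descend {α : Type*} {R : α → α → Prop} {p : α → Prop} :
    ∀ (l : List α), List.Chain' R l → ∀ (h : l ≠ []), p (l.head h) →
      (∃ y ∈ l, ¬ p y) → ∃ a ∈ l, ∃ b ∈ l, R a b ∧ p a ∧ ¬ p b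
  | [], _, h, _, _ => absurd rfl h
  | [x], _, _, hx, hy => by
      obtain ⟨y, hyl, hyp⟩ := hy
      simp only [List.mem_singleton] at hyl
      subst hyl
      exact absurd hx hyp
  | x :: z :: rest, hc, _, hx, hy => by
      by_cases hz : p z
      · have hy' : ∃ y ∈ z :: rest, ¬ p y := by
          obtain ⟨y, hyl, hyp⟩ := hy
          rcases List.mem_cons.mp hyl with rfl | hyl'
          · exact absurd hx hyp
          · exact ⟨y, hyl', hyp⟩
        obtain ⟨a, ha, b, hb, h1, h2, h3⟩ :=
          chain'_descend (z :: rest) hc.tail (by simp) hz hy'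
        exact ⟨a, List.mem_cons_of_mem _ ha, b, List.mem_cons_of_mem _ hb, h1, h2, h3⟩
      · exact ⟨x, List.mem_cons_self, z, List.mem_cons_of_mem _ List.mem_cons_self,
          (List.isChain_cons_cons.mp hc).1, hx, hz⟩

private lemma cyclic_descend {α : Type*} {R : α → α → Prop} {p : α → Prop} (l : List α)
    (hne : l ≠ []) (hch : List.Chain' R l) (hwrap : R (l.getLast hne) (l.head hne))
    (hx : ∃ x ∈ l, p x) (hy : ∃ y ∈ l, ¬ p y) :
    ∃ a ∈ l, ∃ b ∈ l, R a b ∧ p a ∧ ¬ p b := by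
  by_cases hh : p (l.head hne)
  · exact chain'_descend l hch hne hh hy
  · by_cases hl : p (l.getLast hne)
    · exact ⟨_, List.getLast_mem hne, _, List.head_mem hne, hwrap, hl, hh⟩
    · have hrne : l.reverse ≠ [] := by simpa using hne
      have hrch : List.Chain' (flip R) l.reverse := by
        exact List.isChain_reverse.mpr hch
      have hhead : ¬ p (l.reverse.head hrne) := by
        rwa [List.head_reverse]
      obtain ⟨x, hxl, hxp⟩ := hx
      obtain ⟨a, ha, b, hb, h1, h2, h3⟩ :=
        chain'_descend (p := fun t => ¬ p t) l.reverse hrch hrne hhead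
          ⟨x, List.mem_reverse.mpr hxl, not_not_intro hxp⟩
      exact ⟨b, List.mem_reverse.mp hb, a, List.mem_reverse.mp ha, h1, not_not.mp h3, h2⟩

private lemma cyclic_ascend {α : Type*} {R : α → α → Prop} {p : α → Prop} (l : List α)
    (hne : l ≠ []) (hch : List.Chain' R l) (hwrap : R (l.getLast hne) (l.head hne))
    (hx : ∃ x ∈ l, p x) (hy : ∃ y ∈ l, ¬ p y) :
    ∃ a ∈ l, ∃ b ∈ l, R a b ∧ ¬ p a ∧ p b := by
  obtain ⟨x, hxl, hxp⟩ := hx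
  obtain ⟨a, ha, b, hb, h1, h2, h3⟩ :=
    cyclic_descend (p := fun t => ¬ p t) l hne hch hwrap hy
      ⟨x, hxl, not_not_intro hxp⟩
  exact ⟨a, ha, b, hb, h1, h2, not_not.mp h3⟩


private lemma pair_weight {n : ℕ} {A B : Set (Sym2 (Fin n))} (hD : Disjoint A B)
    (hAc : (SimpleGraph.fromEdgeSet A).IsAcyclic)
    (hBc : (SimpleGraph.fromEdgeSet B).IsAcyclic)
    (hcyc : ¬ (SimpleGraph.fromEdgeSet (A ∪ B)).IsAcyclic)
    (S : Finset (Fin n)) (hS : ∀ v e, e ∈ A → v ∈ e → v ∈ S)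
    (QB : Finset (Sym2 (Fin n))) (hQB : ∀ e, e ∈ QB ↔ e ∈ B) :
    2 ≤ ∑ e ∈ QB, (S.filter (· ∈ e)).card := by
  classical
  unfold SimpleGraph.IsAcyclic at hcyc
  push_neg at hcyc
  obtain ⟨v, c, hc⟩ := hcyc
  have hmemfst : ∀ d : (SimpleGraph.fromEdgeSet (A ∪ B)).Dart, d.fst ∈ d.edge :=
    fun d => Sym2.mem_mk_left _ _
  have hmemsnd : ∀ d : (SimpleGraph.fromEdgeSet (A ∪ B)).Dart, d.snd ∈ d.edge :=
    fun d => Sym2.mem_mk_right _ _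
  have hDne : c.darts ≠ [] := by
    have h3 := hc.three_le_length
    have hl : c.darts.length = c.length := c.length_darts
    intro h
    rw [h] at hl
    simp at hl
    omega
  have hedges : c.edges = c.darts.map SimpleGraph.Dart.edge := rfl
  have hedge : ∀ d ∈ c.darts, d.edge ∈ A ∪ B ∧ ¬ d.edge.IsDiag := by
    intro d hd
    have h1 : d.edge ∈ c.edges := by rw [hedges]; exact List.mem_map_of_mem hd
    have h2 := c.edges_subset_edgeSet h1
    rw [SimpleGraph.edgeSet_fromEdgeSet] at h2
    exact ⟨h2.1, h2.2⟩
  have hnotall : ∀ (C : Set (Sym2 (Fin n))), (SimpleGraph.fromEdgeSet C).IsAcyclic →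
      ¬ (∀ e ∈ c.edges, e ∈ C) := by
    intro C hCac hall
    have hsub : ∀ e ∈ c.edges, e ∈ (SimpleGraph.fromEdgeSet C).edgeSet := by
      intro e he
      rw [SimpleGraph.edgeSet_fromEdgeSet]
      have h2 := c.edges_subset_edgeSet he
      rw [SimpleGraph.edgeSet_fromEdgeSet] at h2
      exact ⟨hall e he, h2.2⟩
    exact hCac (c.transfer _ hsub) (hc.transfer hsub)
  have hBex : ∃ d ∈ c.darts, d.edge ∈ B := by
    by_contra h
    push_neg at h
    refine hnotall A hAc (fun e he => ?_)
    rw [hedges] at he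
    obtain ⟨d, hd, rfl⟩ := List.mem_map.mp he
    rcases (hedge d hd).1 with hA | hB
    · exact hA
    · exact absurd hB (h d hd)
  have hAex : ∃ d ∈ c.darts, ¬ d.edge ∈ B := by
    by_contra h
    push_neg at h
    refine hnotall B hBc (fun e he => ?_)
    rw [hedges] at he
    obtain ⟨d, hd, rfl⟩ := List.mem_map.mp he
    exact h d hd
  have hch := SimpleGraph.Walk.isChain_dartAdj_darts c
  have hwrap : (SimpleGraph.fromEdgeSet (A ∪ B)).DartAdj
      (c.darts.getLast hDne) (c.darts.head hDne) := by
    show (c.darts.getLast hDne).snd = (c.darts.head hDne).fst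
    simp
  obtain ⟨a, ha, b, hb, hab, hpa, hpb⟩ :=
    cyclic_descend (p := fun d => d.edge ∈ B) c.darts hDne hch hwrap hBex hAex
  obtain ⟨a', ha', b', hb', hab', hpa', hpb'⟩ :=
    cyclic_ascend (p := fun d => d.edge ∈ B) c.darts hDne hch hwrap hBex hAex
  have hab2 : a.snd = b.fst := hab
  have hab'2 : a'.snd = b'.fst := hab'
  have hbA : b.edge ∈ A := (hedge b hb).1.resolve_right hpb
  have ha'A : a'.edge ∈ A := (hedge a' ha').1.resolve_right hpa'
  have haS : a.snd ∈ S := hS _ _ hbA (by rw [hab2]; exact hmemfst b)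
  have hb'S : b'.fst ∈ S := hS _ _ ha'A (by rw [← hab'2]; exact hmemsnd a')
  have haB : a.edge ∈ B := hpa
  have hb'B : b'.edge ∈ B := hpb'
  by_cases hee : a.edge = b'.edge
  · by_cases hvv : a.snd = b'.fst
    · exfalso
      have hnd : (c.darts.map (fun d => d.snd)).Nodup := by
        rw [SimpleGraph.Walk.map_snd_darts]
        exact hc.support_nodup
      have heq : a = a' := List.inj_on_of_nodup_map hnd ha ha' (by rw [hab'2, ← hvv])
      exact Set.disjoint_left.mp hD ha'A (heq ▸ haB)
    · have hsubset : ({a.snd, b'.fst} : Finset (Fin n)) ⊆ S.filter (· ∈ a.edge) := by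
        intro x hx
        rcases Finset.mem_insert.mp hx with rfl | hx'
        · exact Finset.mem_filter.mpr ⟨haS, hmemsnd a⟩
        · rw [Finset.mem_singleton] at hx'
          subst hx'
          exact Finset.mem_filter.mpr ⟨hb'S, by rw [hee]; exact hmemfst b'⟩
      calc 2 = ({a.snd, b'.fst} : Finset (Fin n)).card := (Finset.card_pair hvv).symm
        _ ≤ (S.filter (· ∈ a.edge)).card := Finset.card_le_card hsubset
        _ ≤ ∑ e ∈ QB, (S.filter (· ∈ e)).card :=
            Finset.single_le_sum (f := fun e => (S.filter (· ∈ e)).card)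
              (fun _ _ => Nat.zero_le _) ((hQB _).mpr haB)
  · have h1 : 1 ≤ (S.filter (· ∈ a.edge)).card :=
      Finset.card_pos.mpr ⟨a.snd, Finset.mem_filter.mpr ⟨haS, hmemsnd a⟩⟩
    have h2 : 1 ≤ (S.filter (· ∈ b'.edge)).card :=
      Finset.card_pos.mpr ⟨b'.fst, Finset.mem_filter.mpr ⟨hb'S, hmemfst b'⟩⟩
    have hsub : ({a.edge, b'.edge} : Finset (Sym2 (Fin n))) ⊆ QB := by
      intro e he
      rcases Finset.mem_insert.mp he with rfl | he'
      · exact (hQB _).mpr haB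
      · rw [Finset.mem_singleton] at he'
        subst he'
        exact (hQB _).mpr hb'B
    calc 2 ≤ (S.filter (· ∈ a.edge)).card + (S.filter (· ∈ b'.edge)).card := by omega
      _ = ∑ e ∈ ({a.edge, b'.edge} : Finset (Sym2 (Fin n))), (S.filter (· ∈ e)).card :=
          (Finset.sum_pair (f := fun e => (S.filter (· ∈ e)).card) hee).symm
      _ ≤ ∑ e ∈ QB, (S.filter (· ∈ e)).card :=
          Finset.sum_le_sum_of_subset hsub

private lemma filter_mem_sym2_card_le {n : ℕ} (S : Finset (Fin n)) (e : Sym2 (Fin n)) :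
    (S.filter (· ∈ e)).card ≤ 2 := by
  classical
  induction e using Sym2.ind with
  | _ x y =>
    have hsub : S.filter (· ∈ s(x, y)) ⊆ {x, y} := by
      intro z hz
      have hz2 := (Finset.mem_filter.mp hz).2
      rw [Sym2.mem_iff] at hz2
      simpa using hz2
    calc (S.filter (· ∈ s(x, y))).card ≤ ({x, y} : Finset (Fin n)).card :=
          Finset.card_le_card hsub
      _ ≤ 2 := by
          have := Finset.card_insert_le x ({y} : Finset (Fin n))
          simpa using this

private lemma key_bound {n k : ℕ} (hn : 5 ≤ n) (P : Fin k → Set (Sym2 (Fin n)))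
    (hP : IsCompleteForestPartition (⊤ : SimpleGraph (Fin n)) k P) :
    2 * (k * k) ≤ n * n * (n - 1) := by
  classical
  obtain ⟨h1, h2, h3, h4, h5⟩ := hP
  rcases le_or_gt k 1 with hk | hk
  · have hkk : k * k ≤ 1 := Nat.mul_le_mul hk hk
    have h100 : (100 : ℕ) ≤ n * n * (n - 1) := by
      calc (100 : ℕ) = 5 * 5 * 4 := by norm_num
        _ ≤ n * n * (n - 1) := Nat.mul_le_mul (Nat.mul_le_mul hn hn) (by omega)
    omega
  set Q : Fin k → Finset (Sym2 (Fin n)) := fun i => (Set.toFinite (P i)).toFinset with hQdef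
  have hQ : ∀ i e, e ∈ Q i ↔ e ∈ P i := fun i e => Set.Finite.mem_toFinset _
  set E := (⊤ : SimpleGraph (Fin n)).edgeFinset with hE
  have hmemE : ∀ e (i : Fin k), e ∈ P i → e ∈ E := by
    intro e i he
    rw [hE, SimpleGraph.mem_edgeFinset, ← h3]
    exact Set.mem_iUnion.mpr ⟨i, he⟩
  have hEeq : E = Finset.univ.biUnion Q := by
    ext e
    simp only [Finset.mem_biUnion, Finset.mem_univ, true_and]
    rw [hE, SimpleGraph.mem_edgeFinset, ← h3, Set.mem_iUnion]
    exact exists_congr (fun i => (hQ i e).symm)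
  have hdisj : ∀ i ∈ (Finset.univ : Finset (Fin k)), ∀ j ∈ Finset.univ, i ≠ j →
      Disjoint (Q i) (Q j) := by
    intro i _ j _ hij
    rw [Finset.disjoint_left]
    intro e hei hej
    exact Set.disjoint_left.mp (h2 i j hij) ((hQ i e).mp hei) ((hQ j e).mp hej)
  have hEcard : E.card = n.choose 2 := by
    rw [hE, SimpleGraph.card_edgeFinset_top_eq_card_choose_two, Fintype.card_fin]
  have hsumcard : ∑ i, (Q i).card = n.choose 2 := by
    rw [← hEcard, hEeq, Finset.card_biUnion hdisj]
  have hkne : (Finset.univ : Finset (Fin k)).Nonempty := ⟨⟨0, by omega⟩, Finset.mem_univ _⟩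
  obtain ⟨i₀, -, hmin⟩ := Finset.exists_min_image Finset.univ (fun i => (Q i).card) hkne
  set t := (Q i₀).card with ht
  have ht1 : 1 ≤ t := by
    obtain ⟨e, he⟩ := h1 i₀
    exact Finset.card_pos.mpr ⟨e, (hQ i₀ e).mpr he⟩
  have hkt : k * t ≤ n.choose 2 := by
    calc k * t = ∑ _i : Fin k, t := by
          rw [Finset.sum_const, Finset.card_univ, Fintype.card_fin, smul_eq_mul]
      _ ≤ ∑ i, (Q i).card := Finset.sum_le_sum (fun i _ => hmin i (Finset.mem_univ i))
      _ = n.choose 2 := hsumcard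
  set S := (Q i₀).biUnion (fun e => Finset.univ.filter (· ∈ e)) with hSdef
  have hSmem : ∀ (v : Fin n) e, e ∈ P i₀ → v ∈ e → v ∈ S := by
    intro v e he hv
    exact Finset.mem_biUnion.mpr
      ⟨e, (hQ i₀ e).mpr he, Finset.mem_filter.mpr ⟨Finset.mem_univ _, hv⟩⟩
  have hScard : S.card ≤ 2 * t := by
    calc S.card ≤ ∑ e ∈ Q i₀, (Finset.univ.filter (· ∈ e)).card := Finset.card_biUnion_le
      _ ≤ ∑ _e ∈ Q i₀, 2 := Finset.sum_le_sum (fun e _ => filter_mem_sym2_card_le _ e)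
      _ = 2 * t := by rw [Finset.sum_const, smul_eq_mul, ht, mul_comm]
  have hdeg : ∀ v : Fin n, (E.filter (fun e => v ∈ e)).card ≤ n - 1 := by
    intro v
    have heq : E.filter (fun e => v ∈ e) = (⊤ : SimpleGraph (Fin n)).incidenceFinset v := by
      rw [SimpleGraph.incidenceFinset_eq_filter, hE]
    rw [heq, SimpleGraph.card_incidenceFinset_eq_degree]
    have hlt := SimpleGraph.degree_lt_card_verts (G := (⊤ : SimpleGraph (Fin n))) v
    rw [Fintype.card_fin] at hlt
    omega
  have htotal : ∑ e ∈ E, (S.filter (· ∈ e)).card ≤ S.card * (n - 1) := by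
    have hswap : ∑ e ∈ E, (S.filter (· ∈ e)).card
        = ∑ v ∈ S, (E.filter (fun e => v ∈ e)).card := by
      simp_rw [Finset.card_filter]
      rw [Finset.sum_comm]
    rw [hswap]
    calc ∑ v ∈ S, (E.filter (fun e => v ∈ e)).card ≤ ∑ _v ∈ S, (n - 1) :=
          Finset.sum_le_sum (fun v _ => hdeg v)
      _ = S.card * (n - 1) := by rw [Finset.sum_const, smul_eq_mul]
  have hpart : ∀ j, j ≠ i₀ → 2 ≤ ∑ e ∈ Q j, (S.filter (· ∈ e)).card := by
    intro j hj
    exact pair_weight (h2 i₀ j (Ne.symm hj)) (h4 i₀) (h4 j) (h5 i₀ j (Ne.symm hj)) S hSmem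
      (Q j) (fun e => hQ j e)
  have hlhs : 2 * (k - 1) ≤ ∑ e ∈ E, (S.filter (· ∈ e)).card := by
    have hsub : (Finset.univ.erase i₀).biUnion Q ⊆ E := by
      intro e he
      obtain ⟨j, _, hej⟩ := Finset.mem_biUnion.mp he
      exact hmemE e j ((hQ j e).mp hej)
    calc 2 * (k - 1) = ∑ _j ∈ Finset.univ.erase i₀, 2 := by
          rw [Finset.sum_const, Finset.card_erase_of_mem (Finset.mem_univ _),
            Finset.card_univ, Fintype.card_fin, smul_eq_mul, mul_comm]
      _ ≤ ∑ j ∈ Finset.univ.erase i₀, ∑ e ∈ Q j, (S.filter (· ∈ e)).card :=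
          Finset.sum_le_sum (fun j hj => hpart j (Finset.ne_of_mem_erase hj))
      _ = ∑ e ∈ (Finset.univ.erase i₀).biUnion Q, (S.filter (· ∈ e)).card :=
          (Finset.sum_biUnion (fun i hi j hj hij =>
            hdisj i (Finset.mem_univ _) j (Finset.mem_univ _) hij)).symm
      _ ≤ ∑ e ∈ E, (S.filter (· ∈ e)).card := Finset.sum_le_sum_of_subset hsub
  have hk1 : k - 1 ≤ t * (n - 1) := by
    have hchain := hlhs.trans htotal
    have h2t : S.card * (n - 1) ≤ 2 * t * (n - 1) := Nat.mul_le_mul_right _ hScard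
    have : 2 * (k - 1) ≤ 2 * (t * (n - 1)) := by
      calc 2 * (k - 1) ≤ 2 * t * (n - 1) := hchain.trans h2t
        _ = 2 * (t * (n - 1)) := by ring
    omega
  have heven : 2 ∣ n * (n - 1) := by
    have hev : Even ((n - 1) * (n - 1 + 1)) := Nat.even_mul_succ_self (n - 1)
    rw [show n - 1 + 1 = n by omega] at hev
    rw [mul_comm]
    exact hev.two_dvd
  have hck : 2 * n.choose 2 = n * (n - 1) := by
    rw [Nat.choose_two_right, Nat.mul_div_cancel' heven]
  have hkk1 : k * (k - 1) ≤ n.choose 2 * (n - 1) := by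
    calc k * (k - 1) ≤ k * (t * (n - 1)) := Nat.mul_le_mul_left _ hk1
      _ = (k * t) * (n - 1) := by ring
      _ ≤ n.choose 2 * (n - 1) := Nat.mul_le_mul_right _ hkt
  have hkC : k ≤ n.choose 2 := le_trans (Nat.le_mul_of_pos_right k ht1) hkt
  have hkid : k * k = k * (k - 1) + k := by
    rcases Nat.exists_eq_succ_of_ne_zero (show k ≠ 0 by omega) with ⟨m, rfl⟩
    simp [Nat.succ_sub_one]
    ring
  have hfin : 2 * (k * k) ≤ 2 * n.choose 2 * n := by
    have hkk2 : k * k ≤ n.choose 2 * (n - 1) + n.choose 2 := by omega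
    calc 2 * (k * k) ≤ 2 * (n.choose 2 * (n - 1) + n.choose 2) := by omega
      _ = 2 * n.choose 2 * ((n - 1) + 1) := by ring
      _ = 2 * n.choose 2 * n := by rw [show n - 1 + 1 = n by omega]
  rw [hck] at hfin
  calc 2 * (k * k) ≤ n * (n - 1) * n := hfin
    _ = n * n * (n - 1) := by ring

/-- For every integer `n ≥ 5`, the achromatic arboricity of `K_n` is
at most `n^{3/2}/√2`. -/
theorem achromaticArboricity_upper_bound (n : ℕ) (hn : 5 ≤ n) :
    (achromaticArboricity (⊤ : SimpleGraph (Fin n)) : ℝ) ≤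
      (n : ℝ) ^ ((3 : ℝ) / 2) / Real.sqrt 2 := by
  have hrhs : (0 : ℝ) ≤ (n : ℝ) ^ ((3 : ℝ) / 2) / Real.sqrt 2 := by positivity
  set Sset := {k | ∃ P : Fin k → Set (Sym2 (Fin n)),
    IsCompleteForestPartition (⊤ : SimpleGraph (Fin n)) k P} with hSset
  have hachr : achromaticArboricity (⊤ : SimpleGraph (Fin n)) = sSup Sset := rfl
  have hball : ∀ k ∈ Sset, 2 * (k * k) ≤ n * n * (n - 1) := by
    rintro k ⟨P, hP⟩
    exact key_bound hn P hP
  have hbd : ∀ k ∈ Sset, k ≤ n * n := by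
    intro k hk
    by_contra h
    push_neg at h
    have habs : (n * n) * (n * n) < (n * n) * (n * n) := by
      calc (n * n) * (n * n) ≤ k * k := Nat.mul_le_mul (by omega) (by omega)
        _ ≤ 2 * (k * k) := Nat.le_mul_of_pos_left _ (by norm_num)
        _ ≤ n * n * (n - 1) := hball k hk
        _ < n * n * n := by
            have hpos : 0 < n * n := by positivity
            exact (Nat.mul_lt_mul_left hpos).mpr (by omega)
        _ ≤ (n * n) * (n * n) :=
            Nat.mul_le_mul_left _ (Nat.le_mul_of_pos_left n (by omega))
    exact absurd habs (lt_irrefl _)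
  have hbdd : BddAbove Sset := ⟨n * n, fun k hk => hbd k hk⟩
  rcases Set.eq_empty_or_nonempty Sset with he | hne
  · rw [hachr, he, csSup_empty]
    simpa using hrhs
  · have hmem := Nat.sSup_mem hne hbdd
    rw [hachr]
    set k := sSup Sset with hkdef
    have h2 := hball k hmem
    have hcastle := (Nat.cast_le (α := ℝ)).mpr h2
    push_cast [Nat.cast_sub (show 1 ≤ n by omega)] at hcastle
    have hk2 : (k : ℝ) ^ 2 ≤ (n : ℝ) ^ 3 / 2 := by nlinarith [sq_nonneg ((n : ℝ))]
    have hk0 : (0 : ℝ) ≤ (k : ℝ) := Nat.cast_nonneg k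
    have hle : (k : ℝ) ≤ Real.sqrt ((n : ℝ) ^ 3 / 2) := by
      rw [show (k : ℝ) = Real.sqrt ((k : ℝ) ^ 2) from (Real.sqrt_sq hk0).symm]
      exact Real.sqrt_le_sqrt hk2
    refine hle.trans (le_of_eq ?_)
    rw [Real.sqrt_div (by positivity) 2]
    congr 1
    rw [Real.sqrt_eq_rpow, show ((3 : ℝ) / 2) = (3 : ℕ) * (1 / 2 : ℝ) by norm_num,
      Real.rpow_mul (Nat.cast_nonneg n), Real.rpow_natCast]
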